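/- Let ℓ be a positive integer and q a point in the Euclidean plane. For a shift j ∈ {0, 1, …, ℓ-1} and an integer k, let B_{j,k} = {p ∈ ℝ² : 2(ℓk + j) ≤ p₁ < 2(ℓ(k+1) + j)} be the k-th block of shift j (a union of ℓ consecutive vertical strips of width 2). Say the closed unit disk around q is cut at shift j if there exist points p, p' with dist(p, q) ≤ 1 and dist(p', q) ≤ 1 lying in two different blocks B_{j,k} ≠ B_{j,k'} of shift j. Then the disk around q is cut at shift j for at most one value of j ∈ {0, 1, …, ℓ-1}. -/
import Mathlib

abbrev Plane : Type := EuclideanSpace ℝ (Fin 2)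

def InBlock (ℓ j : ℕ) (k : ℤ) (p : Plane) : Prop :=
  2 * ((ℓ : ℝ) * (k : ℝ) + (j : ℝ)) ≤ p 0 ∧ p 0 < 2 * ((ℓ : ℝ) * ((k : ℝ) + 1) + (j : ℝ))

def CutAt (ℓ j : ℕ) (q : Plane) : Prop :=
  ∃ p p' : Plane, ∃ k k' : ℤ, k ≠ k' ∧ dist p q ≤ 1 ∧ dist p' q ≤ 1 ∧
    InBlock ℓ j k p ∧ InBlock ℓ j k' p'

lemma coord_dist (p q : Plane) : |p 0 - q 0| ≤ dist p q := by
  rw [EuclideanSpace.dist_eq]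
  have h : |p 0 - q 0| = Real.sqrt (dist (p 0) (q 0) ^ 2) := by
    rw [Real.sqrt_sq_eq_abs, Real.dist_eq, abs_abs]
  rw [h]
  apply Real.sqrt_le_sqrt
  exact Finset.single_le_sum (f := fun i => dist (p i) (q i) ^ 2)
    (fun i _ => sq_nonneg _) (Finset.mem_univ 0)

lemma boundary_in_disk (ℓ j : ℕ) (q : Plane) (h : CutAt ℓ j q) :
    ∃ m : ℤ, q 0 - 1 < 2 * ((ℓ : ℝ) * m + j) ∧ 2 * ((ℓ : ℝ) * m + j) ≤ q 0 + 1 := by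
  obtain ⟨p, p', k, k', hne, hd, hd', hb, hb'⟩ := h
  -- symmetrize: get k < k' case
  have key : ∀ (p p' : Plane) (k k' : ℤ), k < k' → dist p q ≤ 1 → dist p' q ≤ 1 →
      InBlock ℓ j k p → InBlock ℓ j k' p' →
      ∃ m : ℤ, q 0 - 1 < 2 * ((ℓ : ℝ) * m + j) ∧ 2 * ((ℓ : ℝ) * m + j) ≤ q 0 + 1 := by
    intro p p' k k' hlt hd hd' hb hb'
    refine ⟨k + 1, ?_, ?_⟩
    · have h1 : |p 0 - q 0| ≤ 1 := (coord_dist p q).trans hd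
      have h2 : q 0 - 1 ≤ p 0 := by
        have := abs_le.mp h1; linarith [this.2]
      have h3 : p 0 < 2 * ((ℓ : ℝ) * ((k : ℝ) + 1) + j) := hb.2
      push_cast
      linarith
    · have h1 : |p' 0 - q 0| ≤ 1 := (coord_dist p' q).trans hd'
      have h2 : p' 0 ≤ q 0 + 1 := by
        have := abs_le.mp h1; linarith [this.1]
      have h3 : 2 * ((ℓ : ℝ) * (k' : ℝ) + j) ≤ p' 0 := hb'.1
      have h4 : (k : ℝ) + 1 ≤ (k' : ℝ) := by exact_mod_cast hlt
      have h5 : (ℓ : ℝ) * ((k : ℝ) + 1) ≤ (ℓ : ℝ) * (k' : ℝ) :=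
        mul_le_mul_of_nonneg_left h4 (by positivity)
      push_cast
      linarith
  rcases lt_or_gt_of_ne hne with hlt | hgt
  · exact key p p' k k' hlt hd hd' hb hb'
  · exact key p' p k' k hgt hd' hd hb' hb

/-- For each point `q`, the closed unit disk around `q` is cut at shift `j` for at most one
value of `j ∈ {0, …, ℓ-1}`. -/
theorem disk_cut_at_most_one_shift (ℓ : ℕ) (hℓ : 0 < ℓ) (q : Plane) :
    ∀ j j' : ℕ, j < ℓ → j' < ℓ → CutAt ℓ j q → CutAt ℓ j' q → j = j' := by
  intro j j' hj hj' hc hc'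
  obtain ⟨m, hm1, hm2⟩ := boundary_in_disk ℓ j q hc
  obtain ⟨m', hm1', hm2'⟩ := boundary_in_disk ℓ j' q hc'
  -- |b - b'| < 2
  set z : ℤ := (ℓ : ℤ) * m + j - ((ℓ : ℤ) * m' + j')
  have hz : |(z : ℝ)| < 1 := by
    rw [abs_lt]
    constructor <;> · push_cast [z]; linarith
  have hz0 : z = 0 := by
    have h := abs_lt.mp (show |z| < 1 by exact_mod_cast hz)
    omega
  have h0 : (ℓ : ℤ) * m + j - ((ℓ : ℤ) * m' + j') = 0 := hz0
  have heq : (ℓ : ℤ) * (m - m') = (j' : ℤ) - j := by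
    rw [mul_sub]; omega
  rcases lt_trichotomy (m - m') 0 with h | h | h
  · have : (ℓ : ℤ) * (m - m') ≤ -ℓ := by nlinarith [Int.lt_iff_add_one_le.mp h]
    omega
  · rw [h, mul_zero] at heq; omega
  · have : (ℓ : ℤ) ≤ (ℓ : ℤ) * (m - m') := by nlinarith [Int.lt_iff_add_one_le.mp h]
    omega
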